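/- arXiv:1702.07053 — 2 statements merged into one kernel-verified Lean document; each statement's English description precedes it below -/
import Mathlib

section
/- Let d ≥ 1 and 1 ≤ p < q < ∞. Suppose f : ℝ^d → (0,∞) is a positive radial decreasing function (i.e., f(x) = g(|x|) for some nonincreasing g : [0,∞) → (0,∞)) with ‖f‖_{wM^p_q} < ∞. Then ‖f‖_{M^p_q} < ∞ and ‖f‖_{wM^p_q} ≤ ‖f‖_{M^p_q} ≤ ( q·ω_{d-1} / ( d·(q-p)·|B(0,1)| ) )^{1/p} · ‖f‖_{wM^p_q}, where ω_{d-1} is the surface area of the unit sphere S^{d-1} ⊂ ℝ^d and |B(0,1)| is the Lebesgue measure of the unit ball. -/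
open MeasureTheory Metric ENNReal

/-- The Morrey norm `‖f‖_{M^p_q}` of a measurable function `f : ℝ^d → ℝ`:
`sup_{a ∈ ℝ^d, r > 0} |B(a,r)|^{1/q} · ((1/|B(a,r)|) ∫_{B(a,r)} |f(y)|^p dy)^{1/p}`. -/
noncomputable def morreyNorm (d : ℕ) (p q : ℝ)
    (f : EuclideanSpace ℝ (Fin d) → ℝ) : ℝ≥0∞ :=
  ⨆ (a : EuclideanSpace ℝ (Fin d)) (r : ℝ) (_ : 0 < r),
    volume (ball a r) ^ (1 / q) *
      ((volume (ball a r))⁻¹ *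
        ∫⁻ y in ball a r, ENNReal.ofReal (|f y| ^ p)) ^ (1 / p)

/-- The weak Morrey quasi-norm `‖f‖_{wM^p_q} := sup_{γ>0} γ · ‖χ_{{x : |f x| > γ}}‖_{M^p_q}`. -/
noncomputable def weakMorreyNorm (d : ℕ) (p q : ℝ)
    (f : EuclideanSpace ℝ (Fin d) → ℝ) : ℝ≥0∞ :=
  ⨆ (γ : ℝ) (_ : 0 < γ),
    ENNReal.ofReal γ * morreyNorm d p q (Set.indicator {x | γ < |f x|} 1)

private lemma term_le_morreyNorm (d : ℕ) (p q : ℝ) (f : EuclideanSpace ℝ (Fin d) → ℝ)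
    (a : EuclideanSpace ℝ (Fin d)) {r : ℝ} (hr : 0 < r) :
    volume (ball a r) ^ (1 / q) *
      ((volume (ball a r))⁻¹ * ∫⁻ y in ball a r, ENNReal.ofReal (|f y| ^ p)) ^ (1 / p)
      ≤ morreyNorm d p q f := by
  rw [morreyNorm]
  exact le_iSup_of_le a (le_iSup_of_le r (le_iSup_of_le hr le_rfl))

private lemma lintegral_indicator_rpow (d : ℕ) {p : ℝ} (hp : p ≠ 0)
    {S : Set (EuclideanSpace ℝ (Fin d))} (hS : MeasurableSet S)
    (B : Set (EuclideanSpace ℝ (Fin d))) :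
    ∫⁻ y in B, ENNReal.ofReal (|Set.indicator S 1 y| ^ p) = volume (S ∩ B) := by
  have h : (fun y => ENNReal.ofReal (|Set.indicator S (1 : EuclideanSpace ℝ (Fin d) → ℝ) y| ^ p))
      = S.indicator (fun _ => (1 : ℝ≥0∞)) := by
    funext y
    by_cases hy : y ∈ S
    · simp [Set.indicator_of_mem hy]
    · simp [Set.indicator_of_notMem hy, Real.zero_rpow hp]
  rw [h, lintegral_indicator hS, setLIntegral_one, Measure.restrict_apply hS]

/-- A positive radial decreasing function in `wM^p_q` (`1 ≤ p < q < ∞`) lies in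
`M^p_q`, with `‖f‖_{wM^p_q} ≤ ‖f‖_{M^p_q} ≤ (q ω_{d-1} / (d (q-p) |B(0,1)|))^{1/p} ‖f‖_{wM^p_q}`,
where `ω_{d-1}` is the surface area of the unit sphere. -/
theorem radial_decreasing_weakMorrey_eq_morrey (d : ℕ) (hd : 1 ≤ d) (p q : ℝ)
    (hp : 1 ≤ p) (hpq : p < q)
    (f : EuclideanSpace ℝ (Fin d) → ℝ) (hpos : ∀ x, 0 < f x)
    (g : ℝ → ℝ) (hgpos : ∀ t ∈ Set.Ici (0 : ℝ), 0 < g t)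
    (hradial : ∀ x, f x = g ‖x‖) (hdecr : AntitoneOn g (Set.Ici 0))
    (hfw : weakMorreyNorm d p q f < ⊤) :
    morreyNorm d p q f < ⊤ ∧
      weakMorreyNorm d p q f ≤ morreyNorm d p q f ∧
      morreyNorm d p q f ≤
        (ENNReal.ofReal q *
            (volume : Measure (EuclideanSpace ℝ (Fin d))).toSphere Set.univ /
          ((d : ℝ≥0∞) * ENNReal.ofReal (q - p) *
            volume (ball (0 : EuclideanSpace ℝ (Fin d)) 1))) ^ (1 / p) *
          weakMorreyNorm d p q f := by
  have hp0 : (0:ℝ) < p := lt_of_lt_of_le one_pos hp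
  have hq0 : (0:ℝ) < q := hp0.trans hpq
  have hqp0 : (0:ℝ) < q - p := sub_pos.mpr hpq
  haveI : Nonempty (Fin d) := ⟨⟨0, hd⟩⟩
  haveI : Nontrivial (EuclideanSpace ℝ (Fin d)) := inferInstance
  -- measurability of f
  have hfm : Measurable f := by
    have h1 : Antitone (fun t : ℝ => g (max t 0)) := fun s t hst =>
      hdecr (Set.mem_Ici.mpr (le_max_right s 0)) (Set.mem_Ici.mpr (le_max_right t 0))
        (max_le_max hst le_rfl)
    have h2 : f = (fun t => g (max t 0)) ∘ (fun x : EuclideanSpace ℝ (Fin d) => ‖x‖) := by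
      funext x
      simp only [Function.comp_apply, hradial x, max_eq_left (norm_nonneg x)]
    rw [h2]
    exact h1.measurable.comp measurable_norm
  have hSm : ∀ t : ℝ, MeasurableSet {x : EuclideanSpace ℝ (Fin d) | t < |f x|} :=
    fun t => measurableSet_lt measurable_const hfm.abs
  have hSf : ∀ (t : ℝ) (x : EuclideanSpace ℝ (Fin d)),
      x ∈ {x : EuclideanSpace ℝ (Fin d) | t < |f x|} ↔ t < g ‖x‖ := by
    intro t x
    rw [Set.mem_setOf_eq, abs_of_pos (hpos x), hradial x]
  set W := weakMorreyNorm d p q f with hWdef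
  have hWt : W ≠ ⊤ := hfw.ne
  have weak_ge : ∀ t : ℝ, 0 < t →
      ENNReal.ofReal t * morreyNorm d p q (Set.indicator {x | t < |f x|} 1) ≤ W := by
    intro t ht
    rw [hWdef, weakMorreyNorm]
    exact le_iSup_of_le t (le_iSup_of_le ht le_rfl)
  -- L1 : balls inside superlevel sets give lower bounds on W
  have L1 : ∀ t : ℝ, 0 < t → ∀ R : ℝ, 0 < R →
      ball (0 : EuclideanSpace ℝ (Fin d)) R ⊆ {x | t < |f x|} →
      ENNReal.ofReal t ^ q * volume (ball (0 : EuclideanSpace ℝ (Fin d)) R) ≤ W ^ q := by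
    intro t ht R hR hsub
    have hv0 : volume (ball (0 : EuclideanSpace ℝ (Fin d)) R) ≠ 0 :=
      (measure_ball_pos volume 0 hR).ne'
    have hvt : volume (ball (0 : EuclideanSpace ℝ (Fin d)) R) ≠ ⊤ := measure_ball_lt_top.ne
    have hterm : volume (ball (0 : EuclideanSpace ℝ (Fin d)) R) ^ (1/q)
        ≤ morreyNorm d p q (Set.indicator {x | t < |f x|} 1) := by
      have h := term_le_morreyNorm d p q (Set.indicator {x | t < |f x|} 1) 0 hR
      rwa [lintegral_indicator_rpow d hp0.ne' (hSm t),
        Set.inter_eq_self_of_subset_right hsub,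
        ENNReal.inv_mul_cancel hv0 hvt, ENNReal.one_rpow, mul_one] at h
    have h2 : ENNReal.ofReal t * volume (ball (0 : EuclideanSpace ℝ (Fin d)) R) ^ (1/q) ≤ W :=
      le_trans (mul_le_mul_right hterm _) (weak_ge t ht)
    calc ENNReal.ofReal t ^ q * volume (ball (0 : EuclideanSpace ℝ (Fin d)) R)
        = (ENNReal.ofReal t * volume (ball (0 : EuclideanSpace ℝ (Fin d)) R) ^ (1/q)) ^ q := by
          rw [ENNReal.mul_rpow_of_nonneg _ _ hq0.le, ← ENNReal.rpow_mul, one_div,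
            inv_mul_cancel₀ hq0.ne', ENNReal.rpow_one]
      _ ≤ W ^ q := ENNReal.rpow_le_rpow h2 hq0.le
  -- key bound
  have key : ∀ t : ℝ, 0 < t →
      ENNReal.ofReal t ^ q * volume {x : EuclideanSpace ℝ (Fin d) | t < |f x|} ≤ W ^ q := by
    intro t ht
    set A : Set ℝ := {s | 0 ≤ s ∧ t < g s} with hA
    have hmemS : ∀ x : EuclideanSpace ℝ (Fin d),
        x ∈ {x : EuclideanSpace ℝ (Fin d) | t < |f x|} ↔ ‖x‖ ∈ A := by
      intro x
      rw [hSf t x]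
      constructor
      · exact fun h => ⟨norm_nonneg x, h⟩
      · exact fun h => h.2
    by_cases hAne : A.Nonempty
    · by_cases hAb : BddAbove A
      · set R := sSup A with hRdef
        have hsub : {x : EuclideanSpace ℝ (Fin d) | t < |f x|} ⊆ closedBall 0 R := fun x hx =>
          mem_closedBall_zero_iff.mpr (le_csSup hAb ((hmemS x).1 hx))
        rcases lt_or_ge 0 R with hR | hR
        · have hball : ball (0 : EuclideanSpace ℝ (Fin d)) R ⊆ {x | t < |f x|} := by
            intro x hx
            obtain ⟨s, hsA, hlt⟩ := exists_lt_of_lt_csSup hAne (mem_ball_zero_iff.1 hx)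
            exact (hmemS x).2 ⟨norm_nonneg x,
              hsA.2.trans_le (hdecr (Set.mem_Ici.mpr (norm_nonneg x))
                (Set.mem_Ici.mpr hsA.1) hlt.le)⟩
          calc ENNReal.ofReal t ^ q * volume {x : EuclideanSpace ℝ (Fin d) | t < |f x|}
              ≤ ENNReal.ofReal t ^ q * volume (ball (0 : EuclideanSpace ℝ (Fin d)) R) := by
                refine mul_le_mul_right ?_ _
                refine (measure_mono hsub).trans_eq ?_
                exact Measure.addHaar_closedBall_eq_addHaar_ball volume 0 R
            _ ≤ W ^ q := L1 t ht R hR hball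
        · have hzero : volume {x : EuclideanSpace ℝ (Fin d) | t < |f x|} = 0 := by
            have hsub2 : {x : EuclideanSpace ℝ (Fin d) | t < |f x|} ⊆ closedBall 0 0 :=
              hsub.trans (closedBall_subset_closedBall hR)
            rw [closedBall_zero] at hsub2
            exact le_antisymm ((measure_mono hsub2).trans_eq (measure_singleton 0)) zero_le
          rw [hzero, mul_zero]
          exact zero_le
      · exfalso
        have hSuniv : {x : EuclideanSpace ℝ (Fin d) | t < |f x|} = Set.univ :=
          Set.eq_univ_of_forall fun x => by
            obtain ⟨s, hsA, hlt⟩ := (not_bddAbove_iff.1 hAb) ‖x‖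
            exact (hmemS x).2 ⟨norm_nonneg x,
              hsA.2.trans_le (hdecr (Set.mem_Ici.mpr (norm_nonneg x))
                (Set.mem_Ici.mpr hsA.1) hlt.le)⟩
        have hmono : ∀ n : ℕ,
            ENNReal.ofReal t ^ q * volume (ball (0 : EuclideanSpace ℝ (Fin d)) (n+1)) ≤ W ^ q :=
          fun n => L1 t ht (n+1) (by positivity) (by rw [hSuniv]; exact Set.subset_univ _)
        have hiU : volume (Set.univ : Set (EuclideanSpace ℝ (Fin d)))
            = ⨆ n : ℕ, volume (ball (0 : EuclideanSpace ℝ (Fin d)) (n+1)) := by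
          rw [← iUnion_ball_nat_succ (0 : EuclideanSpace ℝ (Fin d))]
          refine Directed.measure_iUnion (Monotone.directed_le fun m n hmn => ?_)
          exact ball_subset_ball (by exact_mod_cast Nat.succ_le_succ hmn)
        have huniv : volume (Set.univ : Set (EuclideanSpace ℝ (Fin d))) = ⊤ :=
          measure_univ_of_isAddLeftInvariant volume
        have hle : ENNReal.ofReal t ^ q * volume (Set.univ : Set (EuclideanSpace ℝ (Fin d)))
            ≤ W ^ q := by
          rw [hiU, ENNReal.mul_iSup]
          exact iSup_le hmono
        rw [huniv, ENNReal.mul_top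
          (ENNReal.rpow_pos (ENNReal.ofReal_pos.mpr ht) ENNReal.ofReal_ne_top).ne'] at hle
        have hWq : W ^ q = ⊤ := top_le_iff.mp hle
        exact hWt ((ENNReal.rpow_eq_top_iff_of_pos hq0).mp hWq)
    · have hzero : volume {x : EuclideanSpace ℝ (Fin d) | t < |f x|} = 0 := by
        have : {x : EuclideanSpace ℝ (Fin d) | t < |f x|} = ∅ := by
          ext x
          simp only [Set.mem_empty_iff_false, iff_false]
          intro hx
          exact hAne ⟨‖x‖, (hmemS x).1 hx⟩
        rw [this, measure_empty]
      rw [hzero, mul_zero]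
      exact zero_le
  -- W is positive
  have hW0 : W ≠ 0 := by
    have h1 : (0:ℝ) < g 1 := hgpos 1 (by norm_num)
    have ht0 : 0 < g 1 / 2 := by positivity
    have hball : ball (0 : EuclideanSpace ℝ (Fin d)) 1 ⊆ {x | g 1 / 2 < |f x|} := by
      intro x hx
      refine (hSf _ x).2 ?_
      have : g 1 ≤ g ‖x‖ := hdecr (Set.mem_Ici.mpr (norm_nonneg x)) (Set.mem_Ici.mpr zero_le_one)
        (mem_ball_zero_iff.1 hx).le
      linarith
    have h2 := L1 _ ht0 1 one_pos hball
    intro hW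
    rw [hW, ENNReal.zero_rpow_of_pos hq0] at h2
    have hpos' : 0 < ENNReal.ofReal (g 1 / 2) ^ q * volume (ball (0 : EuclideanSpace ℝ (Fin d)) 1) :=
      ENNReal.mul_pos (ENNReal.rpow_pos (ENNReal.ofReal_pos.mpr ht0) ENNReal.ofReal_ne_top).ne'
        (measure_ball_pos volume 0 one_pos).ne'
    exact (hpos'.trans_le h2).false
  -- Part 2 : weak ≤ strong
  have part2 : W ≤ morreyNorm d p q f := by
    rw [hWdef, weakMorreyNorm]
    refine iSup_le fun γ => iSup_le fun hγ => ?_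
    rw [morreyNorm, ENNReal.mul_iSup]
    refine iSup_le fun a => ?_
    rw [ENNReal.mul_iSup]
    refine iSup_le fun r => ?_
    rw [ENNReal.mul_iSup]
    refine iSup_le fun hr => ?_
    have hv0 : volume (ball a r) ≠ 0 := (measure_ball_pos volume a hr).ne'
    have hvt : volume (ball a r) ≠ ⊤ := measure_ball_lt_top.ne
    rw [lintegral_indicator_rpow d hp0.ne' (hSm γ)]
    have cheb : ENNReal.ofReal γ ^ p * volume ({x | γ < |f x|} ∩ ball a r)
        ≤ ∫⁻ y in ball a r, ENNReal.ofReal (|f y| ^ p) := by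
      calc ENNReal.ofReal γ ^ p * volume ({x | γ < |f x|} ∩ ball a r)
          = ∫⁻ _ in {x | γ < |f x|} ∩ ball a r, ENNReal.ofReal γ ^ p ∂volume := by
            rw [setLIntegral_const]
        _ ≤ ∫⁻ y in {x | γ < |f x|} ∩ ball a r, ENNReal.ofReal (|f y| ^ p) ∂volume := by
            refine lintegral_mono_ae (((ae_restrict_iff'
              ((hSm γ).inter measurableSet_ball)).2 (ae_of_all _ fun y hy => ?_)))
            rw [ENNReal.ofReal_rpow_of_pos hγ]
            exact ENNReal.ofReal_le_ofReal (Real.rpow_le_rpow hγ.le hy.1.le hp0.le)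
        _ ≤ ∫⁻ y in ball a r, ENNReal.ofReal (|f y| ^ p) ∂volume :=
            lintegral_mono_set Set.inter_subset_right
    have hγp : ENNReal.ofReal γ = (ENNReal.ofReal γ ^ p) ^ (1/p) := by
      rw [← ENNReal.rpow_mul, mul_one_div, div_self hp0.ne', ENNReal.rpow_one]
    calc ENNReal.ofReal γ * (volume (ball a r) ^ (1/q) *
          ((volume (ball a r))⁻¹ * volume ({x | γ < |f x|} ∩ ball a r)) ^ (1/p))
        = volume (ball a r) ^ (1/q) * ((ENNReal.ofReal γ ^ p *
            ((volume (ball a r))⁻¹ * volume ({x | γ < |f x|} ∩ ball a r))) ^ (1/p)) := by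
          rw [ENNReal.mul_rpow_of_nonneg (ENNReal.ofReal γ ^ p)
            ((volume (ball a r))⁻¹ * volume ({x | γ < |f x|} ∩ ball a r))
            (by positivity : (0:ℝ) ≤ 1/p), ← hγp]
          ring
      _ ≤ volume (ball a r) ^ (1/q) *
            (((volume (ball a r))⁻¹ * ∫⁻ y in ball a r, ENNReal.ofReal (|f y| ^ p)) ^ (1/p)) := by
          refine mul_le_mul_right (ENNReal.rpow_le_rpow ?_ (by positivity)) _
          calc ENNReal.ofReal γ ^ p *
                ((volume (ball a r))⁻¹ * volume ({x | γ < |f x|} ∩ ball a r))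
              = (volume (ball a r))⁻¹ *
                (ENNReal.ofReal γ ^ p * volume ({x | γ < |f x|} ∩ ball a r)) := by ring
            _ ≤ (volume (ball a r))⁻¹ * ∫⁻ y in ball a r, ENNReal.ofReal (|f y| ^ p) :=
              mul_le_mul_right cheb _
      _ ≤ morreyNorm d p q f := term_le_morreyNorm d p q f a hr
  -- Part 3 : the per-ball estimate
  have hconst : ∀ (a : EuclideanSpace ℝ (Fin d)) (r : ℝ), 0 < r →
      volume (ball a r) ^ (1/q) *
        ((volume (ball a r))⁻¹ * ∫⁻ y in ball a r, ENNReal.ofReal (|f y| ^ p)) ^ (1/p)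
      ≤ ENNReal.ofReal (q / (q - p)) ^ (1/p) * W := by
    intro a r hr
    set v := volume (ball a r) with hv
    have hv0 : v ≠ 0 := (measure_ball_pos volume a hr).ne'
    have hvt : v ≠ ⊤ := measure_ball_lt_top.ne
    set T0 : ℝ≥0∞ := W * v ^ (-(1/q)) with hT0
    have hvq_t : v ^ (-(1/q)) ≠ ⊤ := by simp [ENNReal.rpow_eq_top_iff, hv0, hvt]
    have hvq_0 : v ^ (-(1/q)) ≠ 0 := by simp [ENNReal.rpow_eq_zero_iff, hv0, hvt]
    have hT0t : T0 ≠ ⊤ := ENNReal.mul_ne_top hWt hvq_t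
    have hT00 : T0 ≠ 0 := mul_ne_zero hW0 hvq_0
    set t0 : ℝ := T0.toReal with ht0def
    have ht0 : 0 < t0 := ENNReal.toReal_pos hT00 hT0t
    have hlayer := lintegral_rpow_eq_lintegral_meas_lt_mul (volume.restrict (ball a r))
        (ae_of_all _ fun y => abs_nonneg (f y)) hfm.abs.aemeasurable hp0
    have hres : ∀ t : ℝ, (volume.restrict (ball a r)) {x | t < |f x|}
        = volume ({x | t < |f x|} ∩ ball a r) := fun t => Measure.restrict_apply (hSm t)
    -- value of the two elementary integrals
    have hIoc : ∫⁻ t in Set.Ioc 0 t0, ENNReal.ofReal (t ^ (p-1))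
        = ENNReal.ofReal (t0 ^ p / p) := by
      have hint : IntervalIntegrable (fun t : ℝ => t ^ (p-1)) volume 0 t0 :=
        intervalIntegral.intervalIntegrable_rpow' (by linarith)
      have hnn : 0 ≤ᵐ[volume.restrict (Set.Ioc (0:ℝ) t0)] fun t : ℝ => t ^ (p-1) := by
        filter_upwards [ae_restrict_mem measurableSet_Ioc] with t htm
        exact Real.rpow_nonneg htm.1.le _
      rw [← ofReal_integral_eq_lintegral_ofReal hint.1 hnn]
      congr 1
      rw [← intervalIntegral.integral_of_le ht0.le, integral_rpow (Or.inl (by linarith))]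
      rw [sub_add_cancel, Real.zero_rpow hp0.ne', sub_zero]
    have hIoi : ∫⁻ t in Set.Ioi t0, ENNReal.ofReal (t ^ (p-1-q))
        = ENNReal.ofReal (t0 ^ (p - q) / (q - p)) := by
      have hint : IntegrableOn (fun t : ℝ => t ^ (p-1-q)) (Set.Ioi t0) volume :=
        integrableOn_Ioi_rpow_of_lt (by linarith) ht0
      have hnn : 0 ≤ᵐ[volume.restrict (Set.Ioi t0)] fun t : ℝ => t ^ (p-1-q) := by
        filter_upwards [ae_restrict_mem measurableSet_Ioi] with t htm
        exact Real.rpow_nonneg (ht0.trans htm).le _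
      rw [← ofReal_integral_eq_lintegral_ofReal hint hnn]
      congr 1
      rw [integral_Ioi_rpow_of_lt (by linarith) ht0]
      rw [show p - 1 - q + 1 = p - q from by ring]
      have h1 : q - p ≠ 0 := by linarith
      have h2 : p - q ≠ 0 := by linarith
      field_simp
      ring
    -- the splitting estimate
    have hsplit : (∫⁻ t in Set.Ioi (0:ℝ),
          (volume.restrict (ball a r)) {x | t < |f x|} * ENNReal.ofReal (t ^ (p-1)))
        ≤ v * ENNReal.ofReal (t0 ^ p / p) + W ^ q * ENNReal.ofReal (t0 ^ (p-q) / (q-p)) := by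
      rw [← Set.Ioc_union_Ioi_eq_Ioi ht0.le,
        lintegral_union measurableSet_Ioi (Set.Ioc_disjoint_Ioi le_rfl)]
      refine add_le_add ?_ ?_
      · calc (∫⁻ t in Set.Ioc (0:ℝ) t0,
              (volume.restrict (ball a r)) {x | t < |f x|} * ENNReal.ofReal (t ^ (p-1)))
            ≤ ∫⁻ t in Set.Ioc (0:ℝ) t0, v * ENNReal.ofReal (t ^ (p-1)) := by
              refine lintegral_mono fun t => mul_le_mul_left ?_ _
              rw [hres]
              exact measure_mono Set.inter_subset_right
          _ = v * ∫⁻ t in Set.Ioc (0:ℝ) t0, ENNReal.ofReal (t ^ (p-1)) :=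
              lintegral_const_mul' _ _ hvt
          _ = v * ENNReal.ofReal (t0 ^ p / p) := by rw [hIoc]
      · have hWq_t : W ^ q ≠ ⊤ := ENNReal.rpow_ne_top_of_nonneg hq0.le hWt
        calc (∫⁻ t in Set.Ioi t0,
              (volume.restrict (ball a r)) {x | t < |f x|} * ENNReal.ofReal (t ^ (p-1)))
            ≤ ∫⁻ t in Set.Ioi t0, W ^ q * ENNReal.ofReal (t ^ (p-1-q)) := by
              refine lintegral_mono_ae (((ae_restrict_iff' measurableSet_Ioi).2
                (ae_of_all _ fun t htm => ?_)))
              have htpos : (0:ℝ) < t := ht0.trans htm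
              have hx0 : (ENNReal.ofReal t) ^ q ≠ 0 :=
                (ENNReal.rpow_pos (ENNReal.ofReal_pos.mpr htpos) ENNReal.ofReal_ne_top).ne'
              have hxt : (ENNReal.ofReal t) ^ q ≠ ⊤ :=
                ENNReal.rpow_ne_top_of_nonneg hq0.le ENNReal.ofReal_ne_top
              have h4 : volume {x : EuclideanSpace ℝ (Fin d) | t < |f x|}
                  ≤ W ^ q / (ENNReal.ofReal t ^ q) :=
                (ENNReal.le_div_iff_mul_le (Or.inl hx0) (Or.inl hxt)).2
                  (by rw [mul_comm]; exact key t htpos)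
              have h1 : (volume.restrict (ball a r)) {x | t < |f x|}
                  ≤ W ^ q * ENNReal.ofReal t ^ (-q) := by
                rw [hres, ENNReal.rpow_neg, ← div_eq_mul_inv]
                exact (measure_mono Set.inter_subset_left).trans h4
              calc (volume.restrict (ball a r)) {x | t < |f x|} * ENNReal.ofReal (t ^ (p-1))
                  ≤ (W ^ q * ENNReal.ofReal t ^ (-q)) * ENNReal.ofReal (t ^ (p-1)) :=
                    mul_le_mul_left h1 _
                _ = W ^ q * ENNReal.ofReal (t ^ (p-1-q)) := by
                    rw [mul_assoc, ENNReal.ofReal_rpow_of_pos htpos,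
                      ← ENNReal.ofReal_mul (Real.rpow_nonneg htpos.le _),
                      ← Real.rpow_add htpos,
                      show -q + (p - 1) = p - 1 - q from by ring]
          _ = W ^ q * ∫⁻ t in Set.Ioi t0, ENNReal.ofReal (t ^ (p-1-q)) :=
              lintegral_const_mul' _ _ hWq_t
          _ = W ^ q * ENNReal.ofReal (t0 ^ (p-q) / (q-p)) := by rw [hIoi]
    -- rewrite the two main terms
    have hT0z : ∀ z : ℝ, T0 ^ z = W ^ z * v ^ (-(z/q)) := by
      intro z
      rw [hT0, ENNReal.mul_rpow_of_ne_top hWt hvq_t, ← ENNReal.rpow_mul,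
        show -(1/q) * z = -(z/q) from by ring]
    have e1 : ENNReal.ofReal (t0 ^ p) = T0 ^ p := by
      rw [ht0def, ENNReal.toReal_rpow, ENNReal.ofReal_toReal
        (ENNReal.rpow_ne_top_of_nonneg hp0.le hT0t)]
    have e2 : ENNReal.ofReal (t0 ^ (p-q)) = T0 ^ (p-q) := by
      rw [ht0def, ENNReal.toReal_rpow, ENNReal.ofReal_toReal
        (by simp [ENNReal.rpow_eq_top_iff, hT00, hT0t])]
    have eA : v * T0 ^ p = W ^ p * v ^ (1 - p/q) := by
      rw [hT0z p, ← mul_assoc, mul_comm v (W ^ p), mul_assoc]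
      congr 1
      rw [show v * v ^ (-(p/q)) = v ^ (1:ℝ) * v ^ (-(p/q)) from by rw [ENNReal.rpow_one],
        ← ENNReal.rpow_add _ _ hv0 hvt, show (1:ℝ) + -(p/q) = 1 - p/q from by ring]
    have eB : W ^ q * T0 ^ (p-q) = W ^ p * v ^ (1 - p/q) := by
      rw [hT0z (p-q), ← mul_assoc, ← ENNReal.rpow_add _ _ hW0 hWt,
        show q + (p - q) = p from by ring,
        show -((p-q)/q) = 1 - p/q from by field_simp; ring]
    have hcsum : (1:ℝ≥0∞) + ENNReal.ofReal (p/(q-p)) = ENNReal.ofReal (q/(q-p)) := by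
      rw [← ENNReal.ofReal_one, ← ENNReal.ofReal_add one_pos.le (by positivity)]
      congr 1
      field_simp
      ring
    have htotal : (∫⁻ y in ball a r, ENNReal.ofReal (|f y| ^ p))
        ≤ ENNReal.ofReal (q/(q-p)) * (W ^ p * v ^ (1 - p/q)) := by
      calc (∫⁻ y in ball a r, ENNReal.ofReal (|f y| ^ p))
          = ENNReal.ofReal p * ∫⁻ t in Set.Ioi (0:ℝ),
              (volume.restrict (ball a r)) {x | t < |f x|} * ENNReal.ofReal (t ^ (p-1)) := hlayer
        _ ≤ ENNReal.ofReal p * (v * ENNReal.ofReal (t0 ^ p / p)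
              + W ^ q * ENNReal.ofReal (t0 ^ (p-q) / (q-p))) := mul_le_mul_right hsplit _
        _ = v * ENNReal.ofReal (t0 ^ p)
              + ENNReal.ofReal (p/(q-p)) * (W ^ q * ENNReal.ofReal (t0 ^ (p-q))) := by
            rw [mul_add]
            congr 1
            · rw [← mul_assoc, mul_comm (ENNReal.ofReal p) v, mul_assoc,
                ← ENNReal.ofReal_mul hp0.le, mul_div_cancel₀ _ hp0.ne']
            · rw [← mul_assoc, mul_comm (ENNReal.ofReal p) (W ^ q), mul_assoc,
                ← ENNReal.ofReal_mul hp0.le,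
                show p * (t0 ^ (p-q) / (q-p)) = p/(q-p) * t0 ^ (p-q) from by ring,
                ENNReal.ofReal_mul (by positivity)]
              ring
        _ = W ^ p * v ^ (1 - p/q)
              + ENNReal.ofReal (p/(q-p)) * (W ^ p * v ^ (1 - p/q)) := by
            rw [e1, e2, eA, eB]
        _ = ENNReal.ofReal (q/(q-p)) * (W ^ p * v ^ (1 - p/q)) := by
            rw [← hcsum]; ring
    -- final algebra
    have e0 : v⁻¹ = v ^ (-1 : ℝ) := (ENNReal.rpow_neg_one v).symm
    have hWp_t : W ^ p ≠ ⊤ := ENNReal.rpow_ne_top_of_nonneg hp0.le hWt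
    have hvpq_t : v ^ (-(p/q)) ≠ ⊤ := by simp [ENNReal.rpow_eq_top_iff, hv0, hvt]
    have h1 : v⁻¹ * (ENNReal.ofReal (q/(q-p)) * (W ^ p * v ^ (1 - p/q)))
        = ENNReal.ofReal (q/(q-p)) * W ^ p * v ^ (-(p/q)) := by
      have e1' : v ^ (-1:ℝ) * v ^ (1 - p/q) = v ^ (-(p/q)) := by
        rw [← ENNReal.rpow_add _ _ hv0 hvt, show (-1:ℝ) + (1 - p/q) = -(p/q) from by ring]
      calc v⁻¹ * (ENNReal.ofReal (q/(q-p)) * (W ^ p * v ^ (1 - p/q)))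
          = ENNReal.ofReal (q/(q-p)) * W ^ p * (v ^ (-1:ℝ) * v ^ (1 - p/q)) := by
            rw [e0]; ring
        _ = ENNReal.ofReal (q/(q-p)) * W ^ p * v ^ (-(p/q)) := by rw [e1']
    have h2 : (ENNReal.ofReal (q/(q-p)) * W ^ p * v ^ (-(p/q))) ^ (1/p)
        = ENNReal.ofReal (q/(q-p)) ^ (1/p) * W * v ^ (-(1/q)) := by
      rw [ENNReal.mul_rpow_of_ne_top (ENNReal.mul_ne_top ENNReal.ofReal_ne_top hWp_t) hvpq_t,
        ENNReal.mul_rpow_of_ne_top ENNReal.ofReal_ne_top hWp_t,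
        ← ENNReal.rpow_mul W, ← ENNReal.rpow_mul v,
        show p * (1/p) = 1 from by field_simp,
        show -(p/q) * (1/p) = -(1/q) from by field_simp,
        ENNReal.rpow_one]
    calc v ^ (1/q) * (v⁻¹ * ∫⁻ y in ball a r, ENNReal.ofReal (|f y| ^ p)) ^ (1/p)
        ≤ v ^ (1/q) * (v⁻¹ * (ENNReal.ofReal (q/(q-p)) * (W ^ p * v ^ (1 - p/q)))) ^ (1/p) := by
          gcongr
      _ = v ^ (1/q) * (ENNReal.ofReal (q/(q-p)) ^ (1/p) * W * v ^ (-(1/q))) := by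
          rw [h1, h2]
      _ = ENNReal.ofReal (q/(q-p)) ^ (1/p) * W * (v ^ (1/q) * v ^ (-(1/q))) := by ring
      _ = ENNReal.ofReal (q/(q-p)) ^ (1/p) * W := by
          rw [← ENNReal.rpow_add _ _ hv0 hvt, show 1/q + -(1/q) = (0:ℝ) from by ring,
            ENNReal.rpow_zero, mul_one]
  have part3 : morreyNorm d p q f ≤ ENNReal.ofReal (q/(q-p)) ^ (1/p) * W := by
    rw [morreyNorm]
    exact iSup_le fun a => iSup_le fun r => iSup_le fun hr => hconst a r hr
  have hconst_eq : ENNReal.ofReal q *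
        (volume : Measure (EuclideanSpace ℝ (Fin d))).toSphere Set.univ /
        ((d : ℝ≥0∞) * ENNReal.ofReal (q - p) *
          volume (ball (0 : EuclideanSpace ℝ (Fin d)) 1))
      = ENNReal.ofReal (q / (q - p)) := by
    rw [Measure.toSphere_apply_univ, finrank_euclideanSpace_fin]
    set V := volume (ball (0 : EuclideanSpace ℝ (Fin d)) 1) with hV
    have hV0 : V ≠ 0 := (measure_ball_pos volume 0 one_pos).ne'
    have hVt : V ≠ ⊤ := measure_ball_lt_top.ne
    have hd0 : (d : ℝ≥0∞) ≠ 0 := Nat.cast_ne_zero.mpr (by omega)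
    have hdt : (d : ℝ≥0∞) ≠ ⊤ := ENNReal.natCast_ne_top d
    rw [ENNReal.ofReal_div_of_pos hqp0,
      show ENNReal.ofReal q * ((d : ℝ≥0∞) * V) = ((d : ℝ≥0∞) * V) * ENNReal.ofReal q from by ring,
      show (d : ℝ≥0∞) * ENNReal.ofReal (q - p) * V
        = ((d : ℝ≥0∞) * V) * ENNReal.ofReal (q - p) from by ring,
      ENNReal.mul_div_mul_left _ _ (mul_ne_zero hd0 hV0) (ENNReal.mul_ne_top hdt hVt)]
  refine ⟨?_, part2, ?_⟩
  · refine part3.trans_lt (ENNReal.mul_lt_top ?_ hfw)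
    exact (ENNReal.rpow_ne_top_of_nonneg (by positivity) ENNReal.ofReal_ne_top).lt_top
  · rw [hconst_eq]
    exact part3
end

section
/- Let d ≥ 1 and 1 ≤ p < q < ∞. Then the function f(x) := |x|^{-d/q} on ℝ^d satisfies ‖f‖_{M^p_q} = |B(0,1)|^{1/q} · ( q·ω_{d-1} / ( d·(q-p)·|B(0,1)| ) )^{1/p}, where ω_{d-1} is the surface area of the unit sphere S^{d-1} ⊂ ℝ^d and |B(0,1)| is the Lebesgue measure of the unit ball in ℝ^d. -/
open MeasureTheory Metric ENNReal

section MorreyAux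
open Set

lemma euclid_nontrivial {d : ℕ} (hd : 1 ≤ d) : Nontrivial (EuclideanSpace ℝ (Fin d)) :=
  Module.nontrivial_of_finrank_pos (R := ℝ) (by rw [finrank_euclideanSpace_fin]; omega)

lemma real_side {r D β p q c : ℝ} (hr : 0 < r) (hc : 0 ≤ c) (hpq : β / p = D / q) :
    (r ^ D) ^ (1/q) * ((r ^ D)⁻¹ * (c * r ^ (D - β))) ^ (1/p) = c ^ (1/p) := by
  rw [← Real.rpow_neg hr.le, mul_left_comm, ← Real.rpow_add hr,
    show -D + (D - β) = -β by ring, Real.mul_rpow hc (Real.rpow_nonneg hr.le _),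
    ← Real.rpow_mul hr.le, ← Real.rpow_mul hr.le, mul_left_comm, ← Real.rpow_add hr,
    show D * (1/q) + -β * (1/p) = D/q - β/p by ring, hpq, sub_self, Real.rpow_zero, mul_one]

lemma T_eq {B : ℝ≥0∞} (hB0 : B ≠ 0) (hBtop : B ≠ ⊤) {x k p q : ℝ} (hx : 0 < x) (hk : 0 < k) (hq : 0 < q) :
    (ENNReal.ofReal x * B) ^ (1/q) * ((ENNReal.ofReal x * B)⁻¹ *
        (ENNReal.ofReal k * B)) ^ (1/p)
      = B ^ (1/q) * ENNReal.ofReal (x ^ (1/q) * (x⁻¹ * k) ^ (1/p)) := by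
  have hA0 : ENNReal.ofReal x ≠ 0 := (ENNReal.ofReal_pos.mpr hx).ne'
  have hinner : (ENNReal.ofReal x * B)⁻¹ * (ENNReal.ofReal k * B)
      = ENNReal.ofReal (x⁻¹ * k) := by
    rw [ENNReal.mul_inv (Or.inl hA0) (Or.inl ENNReal.ofReal_ne_top), mul_mul_mul_comm,
      ENNReal.inv_mul_cancel hB0 hBtop, mul_one, ← ENNReal.ofReal_inv_of_pos hx,
      ← ENNReal.ofReal_mul (inv_nonneg.mpr hx.le)]
  rw [hinner, ENNReal.mul_rpow_of_nonneg _ _ (one_div_nonneg.mpr hq.le),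
    ENNReal.ofReal_rpow_of_pos hx,
    ENNReal.ofReal_rpow_of_pos (mul_pos (inv_pos.mpr hx) hk), mul_right_comm,
    ← ENNReal.ofReal_mul (Real.rpow_nonneg hx.le _)]
  ring

lemma morrey_layer (d : ℕ) {β : ℝ} (hβ : 0 < β) (a : EuclideanSpace ℝ (Fin d)) (r : ℝ) :
    ∫⁻ y in ball a r, ENNReal.ofReal (‖y‖ ^ (-β))
      = ∫⁻ t in Set.Ioi (0:ℝ),
          volume (ball a r ∩ (closedBall (0 : EuclideanSpace ℝ (Fin d)) (t ^ (-β)⁻¹) \ {0})) := by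
  have hmble : Measurable fun y : EuclideanSpace ℝ (Fin d) => ‖y‖ ^ (-β) := by fun_prop
  rw [lintegral_eq_lintegral_meas_le _ (ae_of_all _ fun y => Real.rpow_nonneg (norm_nonneg y) _)
    hmble.aemeasurable]
  refine setLIntegral_congr_fun measurableSet_Ioi (fun t ht => ?_)
  rw [Measure.restrict_apply (measurableSet_le measurable_const hmble)]
  rw [Set.inter_comm]
  congr 1
  ext y
  simp only [Set.mem_inter_iff, Set.mem_setOf_eq, Set.mem_diff, mem_closedBall_zero_iff,
    Set.mem_singleton_iff]
  refine and_congr_right fun _ => ?_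
  have ht' : (0:ℝ) < t := ht
  constructor
  · intro h
    have hy : y ≠ 0 := by
      rintro rfl
      rw [norm_zero, Real.zero_rpow (neg_ne_zero.mpr hβ.ne')] at h
      exact absurd (lt_of_lt_of_le ht' h) (lt_irrefl 0)
    have hy' : 0 < ‖y‖ := norm_pos_iff.mpr hy
    exact ⟨(Real.le_rpow_inv_iff_of_neg hy' ht' (neg_neg_iff_pos.mpr hβ)).mpr h, hy⟩
  · rintro ⟨h, hy⟩
    have hy' : 0 < ‖y‖ := norm_pos_iff.mpr hy
    exact (Real.le_rpow_inv_iff_of_neg hy' ht' (neg_neg_iff_pos.mpr hβ)).mp h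

lemma vol_inter_le {d : ℕ} (hd : 1 ≤ d) (a : EuclideanSpace ℝ (Fin d)) {r s : ℝ} (hr : 0 ≤ r)
    (hs : 0 ≤ s) :
    volume (ball a r ∩ (closedBall (0 : EuclideanSpace ℝ (Fin d)) s \ {0}))
      ≤ ENNReal.ofReal (min r s ^ d) * volume (ball (0 : EuclideanSpace ℝ (Fin d)) 1) := by
  haveI := euclid_nontrivial hd
  have hfr : Module.finrank ℝ (EuclideanSpace ℝ (Fin d)) = d := finrank_euclideanSpace_fin
  rcases le_total r s with h | h
  · calc volume (ball a r ∩ (closedBall (0 : EuclideanSpace ℝ (Fin d)) s \ {0}))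
        ≤ volume (ball a r) := measure_mono inter_subset_left
      _ = ENNReal.ofReal (min r s ^ d) * volume (ball (0 : EuclideanSpace ℝ (Fin d)) 1) := by
          rw [Measure.addHaar_ball _ _ hr, hfr, min_eq_left h]
  · calc volume (ball a r ∩ (closedBall (0 : EuclideanSpace ℝ (Fin d)) s \ {0}))
        ≤ volume (closedBall (0 : EuclideanSpace ℝ (Fin d)) s) :=
          measure_mono (inter_subset_right.trans diff_subset)
      _ = ENNReal.ofReal (min r s ^ d) * volume (ball (0 : EuclideanSpace ℝ (Fin d)) 1) := by
          rw [Measure.addHaar_closedBall _ _ hs, hfr, min_eq_right h]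

lemma vol_inter_eq {d : ℕ} (hd : 1 ≤ d) {r s : ℝ} (hr : 0 ≤ r) (hs : 0 ≤ s) :
    volume (ball (0 : EuclideanSpace ℝ (Fin d)) r ∩
        (closedBall (0 : EuclideanSpace ℝ (Fin d)) s \ {0}))
      = ENNReal.ofReal (min r s ^ d) * volume (ball (0 : EuclideanSpace ℝ (Fin d)) 1) := by
  haveI := euclid_nontrivial hd
  have hfr : Module.finrank ℝ (EuclideanSpace ℝ (Fin d)) = d := finrank_euclideanSpace_fin
  rcases lt_or_ge s r with h | h
  · have hsub : (closedBall (0 : EuclideanSpace ℝ (Fin d)) s \ {0}) ⊆ ball 0 r :=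
      diff_subset.trans (closedBall_subset_ball h)
    rw [Set.inter_eq_self_of_subset_right hsub, measure_diff_null (measure_singleton _),
      Measure.addHaar_closedBall _ _ hs, hfr, min_eq_right h.le]
  · have hsub : ball (0 : EuclideanSpace ℝ (Fin d)) r ⊆ closedBall 0 s :=
      ball_subset_closedBall.trans (closedBall_subset_closedBall h)
    have : ball (0 : EuclideanSpace ℝ (Fin d)) r ∩ (closedBall 0 s \ {0}) = ball 0 r \ {0} := by
      rw [← Set.inter_diff_assoc, Set.inter_eq_self_of_subset_left hsub]
    rw [this, measure_diff_null (measure_singleton _), Measure.addHaar_ball _ _ hr, hfr,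
      min_eq_left h]

lemma J_int (d : ℕ) {β r : ℝ} (hβ : 0 < β) (hβd : β < d) (hr : 0 < r) :
    ∫⁻ t in Ioi (0:ℝ), ENNReal.ofReal (min r (t ^ (-β)⁻¹) ^ d)
      = ENNReal.ofReal ((d / (d - β)) * r ^ ((d:ℝ) - β)) := by
  have hd0 : (0:ℝ) < d := hβ.trans hβd
  set t0 : ℝ := r ^ (-β) with ht0def
  have ht0 : 0 < t0 := Real.rpow_pos_of_pos hr _
  have hc : -((d:ℝ)/β) < -1 := by
    rw [neg_lt_neg_iff, lt_div_iff₀ hβ]; linarith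
  have he : -((d:ℝ)/β) + 1 < 0 := by linarith
  rw [← Set.Ioc_union_Ioi_eq_Ioi ht0.le,
    lintegral_union measurableSet_Ioi (Set.Ioc_disjoint_Ioi le_rfl)]
  have h1 : ∫⁻ t in Ioc (0:ℝ) t0, ENNReal.ofReal (min r (t ^ (-β)⁻¹) ^ d)
      = ENNReal.ofReal (r ^ (d:ℝ) * r ^ (-β)) := by
    have hcongr : ∀ t, t ∈ Ioc (0:ℝ) t0 → ENNReal.ofReal (min r (t ^ (-β)⁻¹) ^ d)
        = ENNReal.ofReal (r ^ d) := fun t ht => by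
      rw [min_eq_left ((Real.le_rpow_inv_iff_of_neg hr ht.1 (neg_neg_iff_pos.mpr hβ)).mpr ht.2)]
    rw [setLIntegral_congr_fun measurableSet_Ioc hcongr, setLIntegral_const,
      Real.volume_Ioc, sub_zero, ← ENNReal.ofReal_mul (by positivity), ← Real.rpow_natCast r d,
      ht0def]
  have h2 : ∫⁻ t in Ioi t0, ENNReal.ofReal (min r (t ^ (-β)⁻¹) ^ d)
      = ENNReal.ofReal (-t0 ^ (-((d:ℝ)/β) + 1) / (-((d:ℝ)/β) + 1)) := by
    have hcongr : ∀ t, t ∈ Ioi t0 → ENNReal.ofReal (min r (t ^ (-β)⁻¹) ^ d)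
        = ENNReal.ofReal (t ^ (-((d:ℝ)/β))) := fun t ht => by
      have htpos : 0 < t := ht0.trans ht
      have hmin : min r (t ^ (-β)⁻¹) = t ^ (-β)⁻¹ :=
        min_eq_right ((Real.rpow_inv_le_iff_of_neg htpos hr (neg_neg_iff_pos.mpr hβ)).mpr
          (le_of_lt ht))
      rw [hmin, ← Real.rpow_natCast (t ^ (-β)⁻¹) d, ← Real.rpow_mul htpos.le]
      congr 2
      rw [inv_neg, neg_mul, inv_mul_eq_div]
    rw [setLIntegral_congr_fun measurableSet_Ioi hcongr,
      ← ofReal_integral_eq_lintegral_ofReal (integrableOn_Ioi_rpow_of_lt hc ht0)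
        ((ae_restrict_iff' measurableSet_Ioi).mpr (ae_of_all _ fun t ht =>
          Real.rpow_nonneg (le_of_lt (ht0.trans ht)) _)),
      integral_Ioi_rpow_of_lt hc ht0]
  have ht0pow : t0 ^ (-((d:ℝ)/β) + 1) = r ^ ((d:ℝ) - β) := by
    rw [ht0def, ← Real.rpow_mul hr.le]
    congr 1
    field_simp
    ring
  have hnn : 0 ≤ -t0 ^ (-((d:ℝ)/β) + 1) / (-((d:ℝ)/β) + 1) := by
    apply le_of_lt
    apply div_pos_of_neg_of_neg _ he
    simp only [neg_neg_iff_pos, Left.neg_neg_iff]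
    exact Real.rpow_pos_of_pos ht0 _
  rw [h1, h2, ← ENNReal.ofReal_add (by positivity) hnn]
  congr 1
  rw [← Real.rpow_add hr, ← sub_eq_add_neg, ht0pow]
  have hne : (d:ℝ) - β ≠ 0 := by linarith
  have hne' : β - (d:ℝ) ≠ 0 := by linarith
  have he' : -((d:ℝ)/β) + 1 = (β - d)/β := by field_simp; ring
  rw [he', div_div_eq_mul_div]
  field_simp
  ring

end MorreyAux

/-- For `1 ≤ p < q < ∞`, the Morrey norm of `|x|^{-d/q}` equals
`|B(0,1)|^{1/q} (q ω_{d-1} / (d (q-p) |B(0,1)|))^{1/p}`, where `ω_{d-1}` is the surface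
area of the unit sphere. -/
theorem morreyNorm_rpow_eq (d : ℕ) (hd : 1 ≤ d) (p q : ℝ)
    (hp : 1 ≤ p) (hpq : p < q) :
    morreyNorm d p q (fun x : EuclideanSpace ℝ (Fin d) => ‖x‖ ^ (-(d / q)))
      = volume (ball (0 : EuclideanSpace ℝ (Fin d)) 1) ^ (1 / q) *
        (ENNReal.ofReal q *
            (volume : Measure (EuclideanSpace ℝ (Fin d))).toSphere Set.univ /
          ((d : ℝ≥0∞) * ENNReal.ofReal (q - p) *
            volume (ball (0 : EuclideanSpace ℝ (Fin d)) 1))) ^ (1 / p) := by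
  haveI := euclid_nontrivial hd
  have hfr : Module.finrank ℝ (EuclideanSpace ℝ (Fin d)) = d := finrank_euclideanSpace_fin
  have hp0 : (0:ℝ) < p := by linarith
  have hq : (0:ℝ) < q := by linarith
  have hqp : (0:ℝ) < q - p := by linarith
  have hd1 : (1:ℝ) ≤ (d:ℝ) := by exact_mod_cast hd
  have hd0 : (0:ℝ) < (d:ℝ) := by linarith
  have hpne := hp0.ne'
  have hqne := hq.ne'
  set β : ℝ := (d:ℝ) * p / q with hβdef
  have hβ : 0 < β := div_pos (mul_pos hd0 hp0) hq
  have hβd : β < (d:ℝ) := by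
    rw [hβdef, div_lt_iff₀ hq]
    nlinarith
  have hβpq : β / p = (d:ℝ) / q := by rw [hβdef]; field_simp
  set c : ℝ := (d:ℝ) / ((d:ℝ) - β) with hcdef
  have hcpos : 0 < c := div_pos hd0 (by linarith)
  set B := volume (ball (0 : EuclideanSpace ℝ (Fin d)) 1) with hBdef
  have hB0 : B ≠ 0 := (measure_ball_pos _ _ one_pos).ne'
  have hBtop : B ≠ ⊤ := measure_ball_lt_top.ne
  set C : ℝ≥0∞ := B ^ (1/q) * ENNReal.ofReal (c ^ (1/p)) with hCdef
  have hint : ∀ y : EuclideanSpace ℝ (Fin d),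
      ENNReal.ofReal (|‖y‖ ^ (-((d:ℝ)/q))| ^ p) = ENNReal.ofReal (‖y‖ ^ (-β)) := fun y => by
    rw [abs_of_nonneg (Real.rpow_nonneg (norm_nonneg y) _), ← Real.rpow_mul (norm_nonneg y)]
    congr 2
    rw [hβdef]; ring
  have hIle : ∀ (a : EuclideanSpace ℝ (Fin d)) {r : ℝ}, 0 < r →
      (∫⁻ y in ball a r, ENNReal.ofReal (‖y‖ ^ (-β)))
        ≤ ENNReal.ofReal (c * r ^ ((d:ℝ) - β)) * B := fun a r hr => by
    rw [morrey_layer d hβ a r, hcdef, ← J_int d hβ hβd hr, ← lintegral_mul_const' B _ hBtop]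
    exact setLIntegral_mono' measurableSet_Ioi fun t ht =>
      vol_inter_le hd a hr.le (Real.rpow_nonneg (le_of_lt ht) _)
  have hIeq : ∀ {r : ℝ}, 0 < r →
      (∫⁻ y in ball (0 : EuclideanSpace ℝ (Fin d)) r, ENNReal.ofReal (‖y‖ ^ (-β)))
        = ENNReal.ofReal (c * r ^ ((d:ℝ) - β)) * B := fun {r} hr => by
    rw [morrey_layer d hβ _ r, hcdef, ← J_int d hβ hβd hr, ← lintegral_mul_const' B _ hBtop]
    exact setLIntegral_congr_fun measurableSet_Ioi (fun t ht =>
      vol_inter_eq hd hr.le (Real.rpow_nonneg (le_of_lt ht) _))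
  have hball : ∀ (a : EuclideanSpace ℝ (Fin d)) {r : ℝ}, 0 ≤ r →
      volume (ball a r) = ENNReal.ofReal (r ^ d) * B := fun a r hr => by
    rw [hBdef, Measure.addHaar_ball _ _ hr, hfr]
  have hT : ∀ r : ℝ, 0 < r →
      (ENNReal.ofReal (r ^ d) * B) ^ (1/q) * ((ENNReal.ofReal (r ^ d) * B)⁻¹ *
        (ENNReal.ofReal (c * r ^ ((d:ℝ) - β)) * B)) ^ (1/p) = C := fun r hr => by
    rw [T_eq hB0 hBtop (pow_pos hr d) (mul_pos hcpos (Real.rpow_pos_of_pos hr _)) hq, hCdef]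
    congr 1
    rw [show (r:ℝ)^(d:ℕ) = r ^ ((d:ℕ):ℝ) from (Real.rpow_natCast r d).symm,
      real_side hr hcpos.le hβpq]
  have hval : ∀ (a : EuclideanSpace ℝ (Fin d)) (r : ℝ), 0 < r →
      volume (ball a r) ^ (1/q) * ((volume (ball a r))⁻¹ *
        ∫⁻ y in ball a r, ENNReal.ofReal (‖y‖ ^ (-β))) ^ (1/p) ≤ C := fun a r hr => by
    rw [hball a hr.le, ← hT r hr]
    exact mul_le_mul_right (ENNReal.rpow_le_rpow (mul_le_mul_right (hIle a hr) _)
      (one_div_nonneg.mpr hp0.le)) _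
  have hval0 :
      volume (ball (0 : EuclideanSpace ℝ (Fin d)) 1) ^ (1/q) *
        ((volume (ball (0 : EuclideanSpace ℝ (Fin d)) 1))⁻¹ *
        ∫⁻ y in ball (0 : EuclideanSpace ℝ (Fin d)) 1,
          ENNReal.ofReal (‖y‖ ^ (-β))) ^ (1/p) = C := by
    rw [hball _ zero_le_one, hIeq one_pos, hT 1 one_pos]
  have hsph : (volume : Measure (EuclideanSpace ℝ (Fin d))).toSphere Set.univ
      = (d : ℝ≥0∞) * B := by
    rw [Measure.toSphere_apply_univ, hfr, hBdef]
  have hRC : B ^ (1 / q) *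
      (ENNReal.ofReal q *
          (volume : Measure (EuclideanSpace ℝ (Fin d))).toSphere Set.univ /
        ((d : ℝ≥0∞) * ENNReal.ofReal (q - p) * B)) ^ (1 / p) = C := by
    have hd0' : (d : ℝ≥0∞) ≠ 0 := Nat.cast_ne_zero.mpr (by omega)
    have hceq : c = q / (q - p) := by
      rw [hcdef, hβdef, div_eq_div_iff (by rw [← hβdef]; exact sub_ne_zero.mpr hβd.ne') hqp.ne']
      field_simp
    rw [hsph, show ENNReal.ofReal q * ((d:ℝ≥0∞) * B) = (d:ℝ≥0∞) * (ENNReal.ofReal q * B) by ring,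
      show (d:ℝ≥0∞) * ENNReal.ofReal (q-p) * B = (d:ℝ≥0∞) * (ENNReal.ofReal (q-p) * B) by ring,
      ENNReal.mul_div_mul_left _ _ hd0' (natCast_ne_top d),
      ENNReal.mul_div_mul_right _ _ hB0 hBtop, ← ENNReal.ofReal_div_of_pos hqp, ← hceq,
      ENNReal.ofReal_rpow_of_pos hcpos, hCdef]
  rw [morreyNorm, hRC]
  apply le_antisymm
  · refine iSup_le fun a => iSup_le fun r => iSup_le fun hr => ?_
    simp only [hint]
    exact hval a r hr
  · refine le_iSup_of_le 0 (le_iSup_of_le 1 (le_iSup_of_le one_pos ?_))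
    simp only [hint]
    rw [hval0]
end
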